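/- Let g be a positive integer, ε > 0 a real number, and N > 0. Let P and Q be fixed positive integers which are relatively prime, and let S ⊆ ℕ × ℕ be a set of pairs (m, k) such that for each k, the set {m ∈ ℕ : (m,k) ∈ S} has at most 3g elements. Then there exists a pair (m, k) ∉ S such that the number q = P·m + Q·k − g + 1 is a prime number with q > N and such that m < q^ε. -/

import Mathlib

open Filter Nat


lemma auxFreq (c : ℝ) (hc : 1 < c) :
    ∃ᶠ n : ℕ in atTop, ((Nat.nth Nat.Prime n : ℝ)) < ((n : ℝ) + 1) ^ c := by
  by_contra hcon
  rw [Filter.not_frequently] at hcon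
  simp only [not_lt] at hcon
  obtain ⟨n0, hn0⟩ := eventually_atTop.mp hcon
  have hbij : Function.Bijective
      (fun n => (⟨Nat.nth Nat.Prime n, Nat.prime_nth_prime n⟩ : Nat.Primes)) := by
    constructor
    · intro a b h
      exact Nat.nth_injective Nat.infinite_setOf_prime (congrArg Subtype.val h)
    · rintro ⟨p, hp⟩
      exact ⟨Nat.count Nat.Prime p, Subtype.ext (Nat.nth_count hp)⟩
  apply Nat.Primes.not_summable_one_div
  rw [← (Equiv.ofBijective _ hbij : ℕ ≃ Nat.Primes).summable_iff]
  have hsum : Summable (fun n : ℕ => ((n : ℝ) + 1) ^ (-c)) := by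
    have := Real.summable_nat_rpow.mpr (by linarith : -c < -1)
    have h2 := (summable_nat_add_iff 1).mpr this
    refine h2.congr fun n => ?_
    push_cast
    ring_nf
  have hsum2 : Summable (fun n : ℕ => (1 : ℝ) / (Nat.nth Nat.Prime n)) := by
    rw [← summable_nat_add_iff n0]
    have hg : Summable (fun n : ℕ => ((n + n0 : ℝ) + 1) ^ (-c)) := by
      have := (summable_nat_add_iff n0).mpr hsum
      refine this.congr fun n => ?_
      push_cast
      ring_nf
    refine hg.of_nonneg_of_le (fun n => by positivity) (fun n => ?_)
    · 
      have h1 : ((n + n0 : ℝ) + 1) ^ c ≤ (Nat.nth Nat.Prime (n + n0) : ℝ) := by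
        have := hn0 (n + n0) (by omega)
        push_cast at this ⊢
        convert this using 3 <;> push_cast <;> ring
      have hpos : (0 : ℝ) < ((n + n0 : ℝ) + 1) ^ c := by positivity
      rw [Real.rpow_neg (by positivity), one_div, inv_le_inv₀ ?_ hpos]
      · exact h1
      · exact lt_of_lt_of_le hpos h1
  exact hsum2

lemma auxReal (gr R Qr x u v xh xd : ℝ) (hgr : 1 ≤ gr) (hR : 1 ≤ R) (hQr : 1 ≤ Qr)
    (hx1 : 1 ≤ x) (hxh1 : 1 ≤ xh) (hu : 2 * xh + 2 ≤ u) (hv : xd * xd ≤ v)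
    (hxd : 4 * R + 12 * R * gr * (gr + 2) + 1 ≤ xd) (hux : u * xd = x) :
    0 ≤ u - xh - 1 ∧ 0 ≤ v / R - 2 ∧
      3 * gr * (x / Qr + gr + 1) < (u - xh - 1) * (v / R - 2) := by
  have hR0 : (0:ℝ) < R := by linarith
  have hQr0 : (0:ℝ) < Qr := by linarith
  have hgpos : (0:ℝ) ≤ 12 * R * gr * (gr + 2) := by positivity
  have hxd4R : 4 * R ≤ xd := by linarith
  have hxd1 : 1 ≤ xd := by linarith
  have hsq : 4 * R ≤ xd * xd := by nlinarith
  have hA : u / 2 ≤ u - xh - 1 := by linarith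
  have hA0 : 0 ≤ u - xh - 1 := by linarith
  have hvR : xd * xd / R ≤ v / R := by gcongr
  have hB1 : xd * xd / (2 * R) ≤ xd * xd / R - 2 := by
    rw [le_sub_iff_add_le, div_add' _ _ _ (by positivity),
      div_le_div_iff₀ (by positivity) hR0]
    nlinarith [mul_le_mul_of_nonneg_right hsq hR0.le]
  have hB : xd * xd / (2 * R) ≤ v / R - 2 := le_trans hB1 (by linarith)
  have hB0 : 0 ≤ v / R - 2 := le_trans (by positivity) hB
  refine ⟨hA0, hB0, ?_⟩
  have hprod : u / 2 * (xd * xd / (2 * R)) ≤ (u - xh - 1) * (v / R - 2) :=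
    mul_le_mul hA hB (by positivity) hA0
  have heq : u / 2 * (xd * xd / (2 * R)) = x * xd / (4 * R) := by
    rw [← hux]
    ring
  rw [heq] at hprod
  refine lt_of_lt_of_le ?_ hprod
  have hx0 : (0:ℝ) < x := by linarith
  have h1 : x / Qr ≤ x := by
    rw [div_le_iff₀ hQr0]; nlinarith
  have h1b : gr + 1 ≤ (gr + 1) * x := by nlinarith
  have h2 : 3 * gr * (x / Qr + gr + 1) ≤ 3 * gr * (gr + 2) * x := by
    nlinarith [mul_le_mul_of_nonneg_left h1 (by positivity : (0:ℝ) ≤ 3 * gr),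
      mul_le_mul_of_nonneg_left h1b (by positivity : (0:ℝ) ≤ 3 * gr)]
  refine lt_of_le_of_lt h2 ?_
  rw [lt_div_iff₀ (by positivity)]
  nlinarith [mul_le_mul_of_nonneg_left hxd hx0.le]

lemma auxEv (gr R Qr ε' δ : ℝ) (hgr : 1 ≤ gr) (hR : 1 ≤ R) (hQr : 1 ≤ Qr)
    (hε1 : 0 < ε') (hε2 : ε' ≤ 2⁻¹) (hδ : δ = ε' / 8) :
    ∀ᶠ x : ℝ in atTop,
      0 ≤ x ^ (1 - δ) - x ^ (1/2 : ℝ) - 1 ∧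
      0 ≤ (x ^ (1/2 : ℝ) - 1) ^ ε' / R - 2 ∧
      3 * gr * (x / Qr + gr + 1) <
        (x ^ (1 - δ) - x ^ (1/2 : ℝ) - 1) * ((x ^ (1/2 : ℝ) - 1) ^ ε' / R - 2) := by
  have hδ0 : 0 < δ := by rw [hδ]; linarith
  have hδ16 : δ ≤ 16⁻¹ := by rw [hδ]; linarith
  filter_upwards [eventually_ge_atTop (1:ℝ),
    (tendsto_rpow_atTop (by norm_num : (0:ℝ) < 4⁻¹)).eventually_ge_atTop 2,
    (tendsto_rpow_atTop hδ0).eventually_ge_atTop (4 * R + 12 * R * gr * (gr + 2) + 1),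
    (tendsto_rpow_atTop (by linarith : (0:ℝ) < 1/2 - δ)).eventually_ge_atTop 4]
    with x hx1 h2 h3 h4
  have hx0 : (0:ℝ) < x := by linarith
  have hxh1 : 1 ≤ x ^ (1/2 : ℝ) := Real.one_le_rpow hx1 (by norm_num)
  have hqq : x ^ (4⁻¹:ℝ) * x ^ (4⁻¹:ℝ) = x ^ (1/2:ℝ) := by
    rw [← Real.rpow_add hx0]; norm_num
  have hxq0 : (0:ℝ) ≤ x ^ (4⁻¹:ℝ) := by positivity
  have hqle : x ^ (4⁻¹:ℝ) ≤ x ^ (1/2:ℝ) - 1 := by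
    nlinarith [mul_le_mul_of_nonneg_right h2 hxq0]
  have hv : x ^ δ * x ^ δ ≤ (x ^ (1/2:ℝ) - 1) ^ ε' := by
    have h5 : (x ^ (4⁻¹:ℝ)) ^ ε' ≤ (x ^ (1/2:ℝ) - 1) ^ ε' :=
      Real.rpow_le_rpow hxq0 hqle hε1.le
    have h6 : (x ^ (4⁻¹:ℝ)) ^ ε' = x ^ δ * x ^ δ := by
      rw [← Real.rpow_mul hx0.le, ← Real.rpow_add hx0]
      have : (4⁻¹:ℝ) * ε' = δ + δ := by rw [hδ]; ring
      rw [this]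
    linarith [h6 ▸ h5]
  have hu : 2 * x ^ (1/2:ℝ) + 2 ≤ x ^ (1 - δ) := by
    have h7 : x ^ (1 - δ) = x ^ (1/2 - δ : ℝ) * x ^ (1/2:ℝ) := by
      rw [← Real.rpow_add hx0]
      congr 1
      ring
    nlinarith [mul_le_mul_of_nonneg_right h4 (le_trans zero_le_one hxh1)]
  have hux : x ^ (1 - δ) * x ^ δ = x := by
    rw [← Real.rpow_add hx0]; norm_num
  exact auxReal gr R Qr x (x ^ (1 - δ)) ((x ^ (1/2:ℝ) - 1) ^ ε') (x ^ (1/2:ℝ)) (x ^ δ)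
    hgr hR hQr hx1 hxh1 hu hv h3 hux
set_option maxHeartbeats 2000000 in
theorem stmt3 (g : ℕ) (hg : 0 < g) (ε : ℝ) (hε : 0 < ε) (N : ℕ) (hN : 0 < N)
    (P Q : ℕ) (hP : 0 < P) (hQ : 0 < Q) (hPQ : Nat.Coprime P Q)
    (S : Set (ℕ × ℕ))
    (hS : ∀ k : ℕ, {m : ℕ | (m, k) ∈ S}.Finite ∧ {m : ℕ | (m, k) ∈ S}.ncard ≤ 3 * g) :
    ∃ m k q : ℕ, (m, k) ∉ S ∧ q + g = P * m + Q * k + 1 ∧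
      q.Prime ∧ N < q ∧ (m : ℝ) < (q : ℝ) ^ ε := by
  classical
  by_contra hcon
  push_neg at hcon
  haveI : NeZero Q := ⟨hQ.ne'⟩
  -- parameters
  set ε' : ℝ := min ε 2⁻¹ with hε'def
  have hε'pos : 0 < ε' := lt_min hε (by norm_num)
  have hε'le : ε' ≤ ε := min_le_left _ _
  have hε'half : ε' ≤ 2⁻¹ := min_le_right _ _
  have hε'1 : ε' ≤ 1 := le_trans hε'half (by norm_num)
  set δ : ℝ := ε' / 8 with hδdef
  have hδpos : 0 < δ := by rw [hδdef]; linarith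
  have hδ16 : δ ≤ 16⁻¹ := by rw [hδdef]; linarith
  have h1δ : 0 < 1 - δ := by linarith
  set c : ℝ := (1 - δ)⁻¹ with hcdef
  have hc : 1 < c := by
    rw [hcdef]
    rw [lt_inv_comm₀ (by norm_num) (by linarith)]
    norm_num
    linarith
  -- choose n
  have hev1 : ∀ᶠ n : ℕ in atTop, (N + 1) * (N + 1) ≤ n := eventually_ge_atTop _
  have htend : Tendsto (fun n : ℕ => ((Nat.nth Nat.Prime n : ℕ) : ℝ)) atTop atTop := by
    apply tendsto_natCast_atTop_atTop.comp
    apply tendsto_atTop_mono (fun n => ?_) tendsto_id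
    have := Nat.add_two_le_nth_prime n
    simp only [id_eq]
    omega
  have hev2 := htend.eventually (auxEv (g : ℝ) ((P : ℝ) * Q) (Q : ℝ)
    ε' δ (by exact_mod_cast hg) (by
      have : (1:ℝ) ≤ P := by exact_mod_cast hP
      have : (1:ℝ) ≤ Q := by exact_mod_cast hQ
      nlinarith) (by exact_mod_cast hQ) hε'pos hε'half hδdef)
  obtain ⟨n, hn1, hnN, hΨ⟩ := ((auxFreq c hc).and_eventually (hev1.and hev2)).exists
  -- basic quantities
  set p : ℕ := Nat.nth Nat.Prime n with hpdef
  have hp : p.Prime := Nat.prime_nth_prime n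
  have hp2 : 2 ≤ p := hp.two_le
  set x : ℝ := (p : ℝ) with hxdef
  have hx1 : (1:ℝ) ≤ x := by
    have : (2:ℝ) ≤ (p:ℝ) := by exact_mod_cast hp2
    rw [hxdef]; linarith
  have hx0 : (0:ℝ) < x := by linarith
  set L : ℕ := Nat.sqrt p with hLdef
  have hNL : N < L := by
    have h1 : (N + 1) * (N + 1) ≤ p := le_trans hnN (by have := Nat.add_two_le_nth_prime n; omega)
    have h2 : N + 1 ≤ L := by
      calc N + 1 = Nat.sqrt ((N+1)*(N+1)) := (Nat.sqrt_eq _).symm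
      _ ≤ L := Nat.sqrt_le_sqrt h1
    omega
  have hL1 : 1 ≤ L := by omega
  have hL1r : (1:ℝ) ≤ (L:ℝ) := by exact_mod_cast hL1
  -- real bounds on L
  have hLup : (L:ℝ) ≤ x ^ (1/2 : ℝ) := by
    rw [← Real.sqrt_eq_rpow]
    have h1 : (L:ℝ) * L ≤ x := by
      have h0 := Nat.sqrt_le p
      rw [← hLdef] at h0
      show (L:ℝ) * L ≤ (p:ℝ)
      exact_mod_cast h0
    have h2 := Real.sqrt_le_sqrt h1
    rwa [Real.sqrt_mul_self (by positivity)] at h2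
  have hLlow : x ^ (1/2 : ℝ) - 1 ≤ (L:ℝ) := by
    rw [← Real.sqrt_eq_rpow]
    have h1 : x ≤ ((L:ℝ) + 1) * ((L:ℝ) + 1) := by
      show (p:ℝ) ≤ ((L:ℝ) + 1) * ((L:ℝ) + 1)
      have h0 := Nat.lt_succ_sqrt p
      rw [← hLdef] at h0
      have h0' : (p : ℝ) < ((L+1 : ℕ) : ℝ) * ((L+1 : ℕ) : ℝ) := by exact_mod_cast h0
      push_cast at h0'
      linarith
    have h2 := Real.sqrt_le_sqrt h1
    rw [Real.sqrt_mul_self (by positivity)] at h2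
    linarith
  -- J and related
  set y : ℝ := (L:ℝ) ^ ε' with hydef
  have hy0 : 0 ≤ y := by positivity
  set F : ℕ := ⌊y⌋₊ with hFdef
  set J : ℕ := F / (P * Q) with hJdef
  set Kb : ℕ := (p + g) / Q with hKbdef
  have hPQ0 : 0 < P * Q := Nat.mul_pos hP hQ
  have hFL : F ≤ L := by
    have h1 : y ≤ (L:ℝ) := by
      calc y ≤ (L:ℝ) ^ (1:ℝ) := Real.rpow_le_rpow_of_exponent_le hL1r hε'1
      _ = (L:ℝ) := Real.rpow_one _
    calc F ≤ ⌊(L:ℝ)⌋₊ := Nat.floor_le_floor h1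
    _ = L := Nat.floor_natCast L
  have hPQJ : P * Q * J ≤ F := by
    rw [hJdef, mul_comm]
    exact Nat.div_mul_le_self F (P * Q)
  have hJreal : y / ((P:ℝ) * Q) - 2 ≤ (J:ℝ) := by
    have h1 : F < P * Q * J + P * Q := by
      have h0 := Nat.div_add_mod F (P * Q)
      rw [← hJdef] at h0
      have h0' := Nat.mod_lt F hPQ0
      omega
    have h2 : (F:ℝ) < (P:ℝ) * Q * J + (P:ℝ) * Q := by exact_mod_cast h1
    have h3 : y < (F:ℝ) + 1 := Nat.lt_floor_add_one y
    have hPQr : (1:ℝ) ≤ (P:ℝ) * Q := by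
      have h4 : 1 ≤ P * Q := hPQ0
      exact_mod_cast h4
    rw [sub_le_iff_le_add, div_le_iff₀ (by linarith)]
    nlinarith
  -- the prime finset
  set X : Finset ℕ := (Nat.primesBelow (p+1)).filter (fun q => L < q) with hXdef
  have hXcard : n - L ≤ X.card := by
    rw [hXdef]
    have e1 : Nat.primeCounting' (p+1) = Nat.primeCounting' p + 1 := by
      show Nat.count Nat.Prime (p+1) = Nat.count Nat.Prime p + 1
      rw [Nat.count_succ, if_pos hp]
    have e2 : Nat.primeCounting' p = n := by rw [hpdef]; exact Nat.primeCounting'_nth_eq n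
    have hD : (Nat.primesBelow (p+1)).card = n + 1 := by
      rw [Nat.primesBelow_card_eq_primeCounting', e1, e2]
    have hsplit := Finset.card_filter_add_card_filter_not
      (s := Nat.primesBelow (p+1)) (p := fun q => L < q)
    have hneg : ((Nat.primesBelow (p+1)).filter (fun q => ¬ L < q)).card ≤ L + 1 := by
      have hsub2 : (Nat.primesBelow (p+1)).filter (fun q => ¬ L < q) ⊆ Finset.range (L+1) := by
        intro q hq
        rw [Finset.mem_filter] at hq
        rw [Finset.mem_range]
        omega
      calc ((Nat.primesBelow (p+1)).filter (fun q => ¬ L < q)).card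
          ≤ (Finset.range (L+1)).card := Finset.card_le_card hsub2
        _ = L + 1 := Finset.card_range _
    omega
  -- candidate maps
  have hunit : IsUnit (P : ZMod Q) := (ZMod.isUnit_iff_coprime P Q).mpr hPQ
  set φm : ℕ → ℕ → ℕ :=
    fun q j => ((P : ZMod Q)⁻¹ * ((q + g - 1 : ℕ) : ZMod Q)).val + j * Q with hφm
  set φk : ℕ → ℕ → ℕ := fun q j => (q + g - 1 - P * φm q j) / Q with hφk
  have key : ∀ q ∈ X, ∀ j ∈ Finset.range J,
      q + g = P * φm q j + Q * φk q j + 1 ∧ φk q j ≤ Kb ∧ (φm q j, φk q j) ∈ S ∧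
        φm q j < Q * J := by
    intro q hq j hj
    rw [hXdef, Finset.mem_filter, Nat.mem_primesBelow] at hq
    obtain ⟨⟨hqp1, hqprime⟩, hLq⟩ := hq
    rw [Finset.mem_range] at hj
    have hq2 : 2 ≤ q := hqprime.two_le
    have hval : ((P : ZMod Q)⁻¹ * ((q + g - 1 : ℕ) : ZMod Q)).val < Q := ZMod.val_lt _
    have hmlt : φm q j < Q * J := by
      calc φm q j < Q + j * Q := by
            simp only [hφm]
            exact Nat.add_lt_add_right hval _
        _ = (j+1) * Q := by ring
        _ ≤ J * Q := Nat.mul_le_mul_right _ hj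
        _ = Q * J := Nat.mul_comm _ _
    have hPQJL : P * (Q * J) ≤ L := by
      rw [← mul_assoc]
      exact le_trans hPQJ hFL
    have hPm : P * φm q j < L :=
      lt_of_lt_of_le (mul_lt_mul_of_pos_left hmlt hP) hPQJL
    have hPmq' : P * φm q j < q := lt_trans hPm hLq
    have hPmq : P * φm q j ≤ q + g - 1 := by omega
    have hmod : (P * φm q j) ≡ (q + g - 1) [MOD Q] := by
      have h8 : ((((P : ZMod Q)⁻¹ * ((q + g - 1 : ℕ) : ZMod Q)).val : ℕ) : ZMod Q)
          = (P : ZMod Q)⁻¹ * ((q + g - 1 : ℕ) : ZMod Q) := ZMod.natCast_rightInverse _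
      apply (ZMod.natCast_eq_natCast_iff _ _ _).mp
      have h9 : (P * φm q j : ℕ)
          = P * (((P : ZMod Q)⁻¹ * ((q + g - 1 : ℕ) : ZMod Q)).val) + (P * j) * Q := by
        simp only [hφm]; ring
      rw [h9, Nat.cast_add, Nat.cast_mul, Nat.cast_mul, ZMod.natCast_self, mul_zero,
        add_zero, h8, ← mul_assoc, ZMod.mul_inv_of_unit _ hunit, one_mul]
    have hdvd : Q ∣ (q + g - 1 - P * φm q j) := (Nat.modEq_iff_dvd' hPmq).mp hmod
    have hQk : Q * φk q j = q + g - 1 - P * φm q j := by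
      simp only [hφk]
      exact Nat.mul_div_cancel' hdvd
    have heq : q + g = P * φm q j + Q * φk q j + 1 := by omega
    have hkKb : φk q j ≤ Kb := by
      simp only [hφk, hKbdef]
      exact Nat.div_le_div_right (by omega)
    have hNq : N < q := lt_trans hNL hLq
    refine ⟨heq, hkKb, ?_, hmlt⟩
    by_contra hns
    have hup := hcon (φm q j) (φk q j) q hns heq hqprime hNq
    have hQJF : Q * J ≤ F := by
      have h9 : Q * J ≤ P * (Q * J) := Nat.le_mul_of_pos_left _ hP
      rw [← mul_assoc] at h9
      exact le_trans h9 hPQJ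
    have c1 : (φm q j : ℝ) < ((Q * J : ℕ) : ℝ) := by exact_mod_cast hmlt
    have c2 : ((Q * J : ℕ) : ℝ) ≤ (F : ℝ) := by exact_mod_cast hQJF
    have c3 : (F : ℝ) ≤ y := Nat.floor_le hy0
    have c4 : y ≤ (q : ℝ) ^ ε' := by
      rw [hydef]
      apply Real.rpow_le_rpow (by positivity) ?_ hε'pos.le
      exact_mod_cast le_of_lt hLq
    have c5 : (q : ℝ) ^ ε' ≤ (q : ℝ) ^ ε := by
      apply Real.rpow_le_rpow_of_exponent_le ?_ hε'le
      exact_mod_cast hq2.trans' (by norm_num)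
    exact absurd hup (not_le.mpr (c1.trans_le (c2.trans (c3.trans (c4.trans c5)))))
  -- counting
  set Cfin : Finset (ℕ × ℕ) :=
    (X ×ˢ Finset.range J).image (fun z => (φm z.1 z.2, φk z.1 z.2)) with hCdef
  have hinj : Set.InjOn (fun z : ℕ × ℕ => (φm z.1 z.2, φk z.1 z.2))
      ↑(X ×ˢ Finset.range J) := by
    intro a ha b hb hab
    rw [Finset.coe_product] at ha hb
    obtain ⟨ha1, ha2⟩ := ha
    obtain ⟨hb1, hb2⟩ := hb
    simp only [Finset.mem_coe] at ha1 ha2 hb1 hb2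
    obtain ⟨heqa, -, -, -⟩ := key a.1 ha1 a.2 ha2
    obtain ⟨heqb, -, -, -⟩ := key b.1 hb1 b.2 hb2
    have hm : φm a.1 a.2 = φm b.1 b.2 := congrArg Prod.fst hab
    have hk : φk a.1 a.2 = φk b.1 b.2 := congrArg Prod.snd hab
    rw [← hm, ← hk] at heqb
    have hq : a.1 = b.1 := by omega
    have hj : a.2 = b.2 := by
      rw [hq] at hm
      simp only [hφm] at hm
      have := Nat.add_left_cancel hm
      exact Nat.eq_of_mul_eq_mul_right hQ this
    exact Prod.ext hq hj
  have hcard : Cfin.card = X.card * J := by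
    rw [hCdef, Finset.card_image_of_injOn hinj, Finset.card_product, Finset.card_range]
  have hsub : Cfin ⊆ (Finset.range (Kb+1)).biUnion
      (fun k => ((hS k).1.toFinset.image (fun m => (m, k)))) := by
    intro z hz
    rw [hCdef, Finset.mem_image] at hz
    obtain ⟨w, hw, rfl⟩ := hz
    rw [Finset.mem_product] at hw
    obtain ⟨-, hkKb, hmS, -⟩ := key w.1 hw.1 w.2 hw.2
    rw [Finset.mem_biUnion]
    refine ⟨φk w.1 w.2, Finset.mem_range.mpr (by omega), ?_⟩
    rw [Finset.mem_image]
    exact ⟨φm w.1 w.2, (Set.Finite.mem_toFinset _).mpr hmS, rfl⟩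
  have hcount : Cfin.card ≤ (Kb + 1) * (3 * g) := by
    calc Cfin.card ≤ ((Finset.range (Kb+1)).biUnion
          (fun k => ((hS k).1.toFinset.image (fun m => (m, k))))).card :=
        Finset.card_le_card hsub
      _ ≤ ∑ k ∈ Finset.range (Kb+1), ((hS k).1.toFinset.image (fun m => (m, k))).card :=
        Finset.card_biUnion_le
      _ ≤ ∑ k ∈ Finset.range (Kb+1), 3 * g := by
          apply Finset.sum_le_sum
          intro k _
          calc ((hS k).1.toFinset.image (fun m => (m, k))).card
              ≤ (hS k).1.toFinset.card := Finset.card_image_le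
            _ = {m : ℕ | (m, k) ∈ S}.ncard := (Set.ncard_eq_toFinset_card _ (hS k).1).symm
            _ ≤ 3 * g := (hS k).2
      _ = (Kb + 1) * (3 * g) := by
          rw [Finset.sum_const, Finset.card_range, smul_eq_mul]
  -- the numeric contradiction
  obtain ⟨hA0, hB0, hmain⟩ := hΨ
  have hx12 : (1:ℝ) ≤ x ^ (1/2 : ℝ) := Real.one_le_rpow hx1 (by norm_num)
  have hxnd : x ^ (1 - δ) < (n : ℝ) + 1 := by
    have h1 := Real.rpow_lt_rpow (le_of_lt hx0) hn1 h1δ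
    rwa [← Real.rpow_mul (by positivity), hcdef, inv_mul_cancel₀ (ne_of_gt h1δ),
      Real.rpow_one] at h1
  have hcast : (n:ℝ) - (L:ℝ) ≤ ((n - L : ℕ) : ℝ) := by
    rcases le_total L n with h | h
    · rw [Nat.cast_sub h]
    · have h2 : n - L = 0 := Nat.sub_eq_zero_of_le h
      have h3 : (n:ℝ) ≤ (L:ℝ) := by exact_mod_cast h
      rw [h2, Nat.cast_zero]
      linarith
  have hAle : x ^ (1 - δ) - x ^ (1/2 : ℝ) - 1 ≤ ((n - L : ℕ) : ℝ) := by
    have : x ^ (1 - δ) - x ^ (1/2 : ℝ) - 1 ≤ (n:ℝ) - (L:ℝ) := by linarith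
    linarith
  have hBle : (x ^ (1/2 : ℝ) - 1) ^ ε' / ((P:ℝ) * Q) - 2 ≤ (J:ℝ) := by
    have hb1 : (x ^ (1/2 : ℝ) - 1) ^ ε' ≤ y := by
      rw [hydef]
      exact Real.rpow_le_rpow (by linarith) hLlow hε'pos.le
    have hPQr : (0:ℝ) < (P:ℝ) * Q := by
      have : (0:ℕ) < P * Q := hPQ0
      exact_mod_cast this
    have hb2 : (x ^ (1/2 : ℝ) - 1) ^ ε' / ((P:ℝ) * Q) ≤ y / ((P:ℝ) * Q) := by gcongr
    linarith
  have hprod : (x ^ (1 - δ) - x ^ (1/2 : ℝ) - 1) * ((x ^ (1/2 : ℝ) - 1) ^ ε' / ((P:ℝ) * Q) - 2)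
      ≤ ((n - L : ℕ) : ℝ) * (J : ℝ) :=
    mul_le_mul hAle hBle hB0 (Nat.cast_nonneg _)
  have hKble : ((Kb : ℕ) : ℝ) + 1 ≤ x / Q + g + 1 := by
    have h1 : ((Kb : ℕ) : ℝ) ≤ ((p + g : ℕ) : ℝ) / (Q:ℝ) := by
      rw [hKbdef]
      exact Nat.cast_div_le
    have hQr : (1:ℝ) ≤ (Q:ℝ) := by exact_mod_cast hQ
    have h2 : ((p + g : ℕ) : ℝ) / (Q:ℝ) = x / Q + (g:ℝ) / Q := by
      push_cast
      ring
    have h3 : (g:ℝ) / Q ≤ (g:ℝ) := div_le_self (by positivity) hQr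
    rw [h2] at h1
    linarith
  have hfinal : (Kb + 1) * (3 * g) < (n - L) * J := by
    have hglt : (0:ℝ) ≤ 3 * (g:ℝ) := by positivity
    have h1 : (((Kb + 1) * (3 * g) : ℕ) : ℝ) ≤ 3 * (g:ℝ) * (x / Q + (g:ℝ) + 1) := by
      push_cast
      nlinarith
    have h2 : (((Kb + 1) * (3 * g) : ℕ) : ℝ) < (((n - L) * J : ℕ) : ℝ) := by
      have h4 : ((n - L : ℕ) : ℝ) * (J : ℝ) = (((n - L) * J : ℕ) : ℝ) := by
        push_cast
        ring
      calc (((Kb + 1) * (3 * g) : ℕ) : ℝ) ≤ 3 * (g:ℝ) * (x / Q + (g:ℝ) + 1) := h1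
        _ < ((n - L : ℕ) : ℝ) * (J : ℝ) := lt_of_lt_of_le hmain hprod
        _ = (((n - L) * J : ℕ) : ℝ) := h4
    exact_mod_cast h2
  have hhigh : (n - L) * J ≤ (Kb + 1) * (3 * g) := by
    calc (n - L) * J ≤ X.card * J := Nat.mul_le_mul_right J hXcard
      _ = Cfin.card := hcard.symm
      _ ≤ (Kb + 1) * (3 * g) := hcount
  omega
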